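/- Meyers' Theorem 3': Let a < b and let f : ℝ → ℝ be differentiable at every point of the closed interval [a, b] with derivative f' continuous on [a, b]. If (f(b) - f(a)) * (f(b) - f(a) - (b - a) * f'(a)) < 0, then there exists ξ ∈ (a, b) such that f'(ξ) = (f(b) - f(a)) / (b - ξ). -/
import Mathlib


/-- Meyers' Theorem 3'. -/
theorem meyers_theorem_3' (f f' : ℝ → ℝ) (a b : ℝ) (hab : a < b)
    (hf : ∀ x ∈ Set.Icc a b, HasDerivWithinAt f (f' x) (Set.Icc a b) x)
    (hf' : ContinuousOn f' (Set.Icc a b))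
    (hcond : (f b - f a) * (f b - f a - (b - a) * f' a) < 0) :
    ∃ ξ ∈ Set.Ioo a b, f' ξ = (f b - f a) / (b - ξ) := by
  set K := f b - f a with hK
  set F : ℝ → ℝ := fun x => (b - x) * f' x - K with hF
  have hFcont : ContinuousOn F (Set.Icc a b) := by
    apply ContinuousOn.sub
    · exact (continuousOn_const.sub continuousOn_id).mul hf'
    · exact continuousOn_const
  have hFa : F a = (b - a) * f' a - K := rfl
  have hFb : F b = -K := by simp [hF]
  have hprod : F a * F b < 0 := by
    rw [hFa, hFb]; nlinarith
  -- F a and F b have opposite signs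
  have hzero : ∃ ξ ∈ Set.Ioo a b, F ξ = 0 := by
    rcases mul_neg_iff.mp hprod with ⟨ha, hb⟩ | ⟨ha, hb⟩
    · have : (0:ℝ) ∈ Set.Ioo (F b) (F a) := ⟨hb, ha⟩
      have := intermediate_value_Ioo' hab.le hFcont this
      obtain ⟨ξ, hξ, hξ0⟩ := this
      exact ⟨ξ, hξ, hξ0⟩
    · have : (0:ℝ) ∈ Set.Ioo (F a) (F b) := ⟨ha, hb⟩
      have := intermediate_value_Ioo hab.le hFcont this
      obtain ⟨ξ, hξ, hξ0⟩ := this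
      exact ⟨ξ, hξ, hξ0⟩
  obtain ⟨ξ, hξ, hξ0⟩ := hzero
  refine ⟨ξ, hξ, ?_⟩
  have hbξ : b - ξ ≠ 0 := sub_ne_zero.mpr (ne_of_gt hξ.2)
  have : (b - ξ) * f' ξ = K := by
    have := hξ0
    simp only [hF] at this
    linarith
  field_simp
  linarith [this]
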